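/- There exist a set P with a reflexive and symmetric relation 𝒞 and a heap (E, ≤, ε) with pieces in P and concurrency relation 𝒞 such that every subinterval of E is ranked but E itself is not ranked. (One may take P = {1,2,3,4,5} with distinct a, b concurrent iff {a,b} ∈ {{1,2},{2,3},{3,4},{4,5},{5,1}}, so the concurrency graph is a pentagon.) -/

import Mathlib

/-- `ρ` is a rank function for the poset `E`:
it increases by exactly 1 along covering relations. -/
def IsRankFunction {E : Type*} [PartialOrder E] (ρ : E → ℤ) : Prop :=
  ∀ a b : E, a ⋖ b → ρ b = ρ a + 1

/-- A poset is ranked if it admits a rank function. -/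
def Ranked (E : Type*) [PartialOrder E] : Prop :=
  ∃ ρ : E → ℤ, IsRankFunction ρ

/-- Two elements lie in the same connected component of the poset: the
equivalence relation generated by the covering relation. -/
def SameComponent {E : Type*} [PartialOrder E] (a b : E) : Prop :=
  Relation.EqvGen (fun x y : E => x ⋖ y) a b

/-- The heap axioms for a labelling `ε : E → P` of a poset `E` with
concurrency relation `C` on the pieces `P`. -/
def IsHeap {E P : Type*} [PartialOrder E] (C : P → P → Prop) (ε : E → P) : Prop :=
  (∀ α β : E, C (ε α) (ε β) → α ≤ β ∨ β ≤ α) ∧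
  (∀ α β : E, α ≤ β ↔ Relation.TransGen (fun x y : E => x ≤ y ∧ C (ε x) (ε y)) α β)

/-- `[a, b]` is a minimal balanced subinterval: `a ≠ b`, `ε a = ε b`, and the
only elements of `[a, b]` with label `ε a` are `a` and `b`. -/
def MinBalanced {E P : Type*} [PartialOrder E] (ε : E → P) (a b : E) : Prop :=
  a < b ∧ ε a = ε b ∧ ∀ c ∈ Set.Icc a b, ε c = ε a → c = a ∨ c = b

/-- The set `S_{[a,b]}` of elements of `[a, b]` whose label is distinct from,
but concurrent with, the label of `a`. -/
def intervalS {E P : Type*} [PartialOrder E] (C : P → P → Prop) (ε : E → P)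
    (a b : E) : Set E :=
  {c | c ∈ Set.Icc a b ∧ ε c ≠ ε a ∧ C (ε a) (ε c)}

/-- The concurrency subgraph of the heap (the simple graph on the labels
occurring in `E`, with distinct labels adjacent iff concurrent) is acyclic. -/
def NoCircuits {E P : Type*} [PartialOrder E] (C : P → P → Prop) (ε : E → P) : Prop :=
  (SimpleGraph.fromRel (fun v w : Set.range ε => C v.1 w.1)).IsAcyclic

/-- A helper predicate: the subinterval [a, b] of E (with the induced order)
is a ranked poset. -/
def SubintervalRanked {E : Type*} [PartialOrder E] (a b : E) : Prop :=
  Ranked (Set.Icc a b)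

/-! ### Auxiliary construction: the pentagon heap -/

inductive E5 : Type
  | e0 | e1 | e2 | e3 | e4
deriving DecidableEq

instance : Fintype E5 :=
  Fintype.ofList [E5.e0, E5.e1, E5.e2, E5.e3, E5.e4] (by intro x; cases x <;> simp)

open E5

/-- Order with covers `e4 ⋖ e0 ⋖ e1`, `e2 ⋖ e1`, `e2 ⋖ e3`, `e4 ⋖ e3`. -/
def eleB : E5 → E5 → Bool
  | e4, e0 => true
  | e0, e1 => true
  | e4, e1 => true
  | e2, e1 => true
  | e2, e3 => true
  | e4, e3 => true
  | x, y => x == y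

instance : PartialOrder E5 where
  le a b := eleB a b = true
  le_refl := by intro a; show eleB a a = true; revert a; decide
  le_trans := by
    intro a b c
    show eleB a b = true → eleB b c = true → eleB a c = true
    revert a b c; decide
  le_antisymm := by
    intro a b
    show eleB a b = true → eleB b a = true → a = b
    revert a b; decide

instance : DecidableRel (α := E5) (· ≤ ·) :=
  fun a b => inferInstanceAs (Decidable (eleB a b = true))

instance : DecidableRel (α := E5) (· < ·) :=
  fun a b => decidable_of_iff _ (lt_iff_le_not_ge (a := a) (b := b)).symm

/-- Pentagon concurrency on `Fin 5`. -/
def pentB : Fin 5 → Fin 5 → Bool :=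
  fun a b => a == b || a + 1 == b || b + 1 == a

def pentC : Fin 5 → Fin 5 → Prop := fun a b => pentB a b = true

instance : DecidableRel pentC := fun a b => inferInstanceAs (Decidable (pentB a b = true))

def epsilon : E5 → Fin 5
  | e0 => 0
  | e1 => 1
  | e2 => 2
  | e3 => 3
  | e4 => 4

/-- Rank functions used on subintervals. -/
def rho1 : E5 → ℤ
  | e4 => 0
  | e0 => 1
  | e1 => 2
  | e2 => 1
  | e3 => 2

def rho2 : E5 → ℤ
  | e4 => 0
  | _ => 1

def rf (a b : E5) : E5 → ℤ := if a = e4 ∧ b = e3 then rho2 else rho1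

instance (a b : E5) : DecidablePred (· ∈ Set.Icc a b) :=
  fun _ => decidable_of_iff _ Set.mem_Icc.symm

/-- Generic criterion for a rank function on a subset. -/
lemma rank_of (S : Set E5) (ρ : E5 → ℤ)
    (h : ∀ x ∈ S, ∀ y ∈ S, x < y →
      ρ y = ρ x + 1 ∨ ∃ z ∈ S, x < z ∧ z < y) :
    IsRankFunction (fun e : S => ρ e.1) := by
  rintro ⟨x, hx⟩ ⟨y, hy⟩ hc
  have hlt : x < y := Subtype.mk_lt_mk.mp hc.1
  rcases h x hx y hy hlt with h1 | ⟨z, hz, h2, h3⟩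
  · exact h1
  · have hl1 : (⟨x, hx⟩ : S) < ⟨z, hz⟩ := Subtype.mk_lt_mk.mpr h2
    have hl2 : (⟨z, hz⟩ : S) < ⟨y, hy⟩ := Subtype.mk_lt_mk.mpr h3
    exact absurd hl2 (hc.2 hl1)

lemma rf_spec : ∀ a b x y : E5, a ≤ x → x ≤ b → a ≤ y → y ≤ b → x < y →
    rf a b y = rf a b x + 1 ∨ ∃ z : E5, (a ≤ z ∧ z ≤ b) ∧ x < z ∧ z < y := by
  decide

/-- There exist a set of pieces P with a reflexive and symmetric concurrency
relation C and a (finite) heap E with pieces in P such that every subinterval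
of E is ranked but E itself is not ranked. -/
theorem exists_heap_subintervals_ranked_not_ranked :
    ∃ (P E : Type) (iE : PartialOrder E) (_ : Fintype E)
      (C : P → P → Prop) (ε : E → P),
      Reflexive C ∧ Symmetric C ∧ @IsHeap E P iE C ε ∧
      (∀ a b : E, iE.le a b → @SubintervalRanked E iE a b) ∧
      ¬ @Ranked E iE := by
  refine ⟨Fin 5, E5, inferInstance, inferInstance, pentC, epsilon, ?_⟩
  refine ⟨?_, ?_, ?_, ?_, ?_⟩
  · intro a; show pentB a a = true; revert a; decide
  · intro a b h
    show pentB b a = true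
    revert h; show pentB a b = true → _
    revert a b; decide
  refine ⟨?_, ?_⟩
  · intro α β h
    revert h; revert α β
    decide
  · intro α β
    constructor
    · intro h
      by_cases hc : α = e4 ∧ β = e1
      · obtain ⟨ha, hb⟩ := hc
        subst ha; subst hb
        have s1 : e4 ≤ e0 ∧ pentC (epsilon e4) (epsilon e0) := by exact ⟨by decide, by decide⟩
        have s2 : e0 ≤ e1 ∧ pentC (epsilon e0) (epsilon e1) := by exact ⟨by decide, by decide⟩
        exact Relation.TransGen.head s1 (Relation.TransGen.single s2)
      · refine Relation.TransGen.single ⟨h, ?_⟩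
        revert h hc; revert α β
        decide
    · intro h
      induction h with
      | single h => exact h.1
      | tail _ h ih => exact le_trans ih h.1
  · intro a b hab
    refine ⟨fun e => rf a b e.1, rank_of _ _ ?_⟩
    intro x hx y hy hlt
    obtain ⟨hax, hxb⟩ := Set.mem_Icc.mp hx
    obtain ⟨hay, hyb⟩ := Set.mem_Icc.mp hy
    rcases rf_spec a b x y hax hxb hay hyb hlt with h | ⟨z, ⟨h1, h2⟩, h3, h4⟩
    · exact Or.inl h
    · exact Or.inr ⟨z, Set.mem_Icc.mpr ⟨h1, h2⟩, h3, h4⟩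
  · rintro ⟨ρ, hρ⟩
    have h1 : ρ e0 = ρ e4 + 1 := hρ _ _ (by constructor <;> decide)
    have h2 : ρ e1 = ρ e0 + 1 := hρ _ _ (by constructor <;> decide)
    have h3 : ρ e1 = ρ e2 + 1 := hρ _ _ (by constructor <;> decide)
    have h4 : ρ e3 = ρ e2 + 1 := hρ _ _ (by constructor <;> decide)
    have h5 : ρ e3 = ρ e4 + 1 := hρ _ _ (by constructor <;> decide)
    omega
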